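/- arXiv:2206.00261 — 3 statements merged into one kernel-verified Lean document; each statement's English description precedes it below -/
import Mathlib

section
/- Let d ≥ 1 and consider g(z) = Σ_{j=1}^d α_j⁺ · max(z − β_j⁺, 0) + Σ_{j=1}^d α_j⁻ · max(−z + β_j⁻, 0), where β_d⁻ ≤ ⋯ ≤ β_1⁻ = 0 = β_1⁺ ≤ ⋯ ≤ β_d⁺, and for every k with 1 ≤ k ≤ d, Σ_{j=1}^k α_j⁺ > 0 and Σ_{j=1}^k α_j⁻ < 0. Then g is strictly increasing on ℝ and g(0) = 0. -/
open Finset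

private lemma abel_lb : ∀ (n : ℕ), 1 ≤ n → ∀ (a δ : ℕ → ℝ) (c : ℝ),
    (∀ k < n, c ≤ ∑ j ∈ range (k+1), a j) →
    (∀ i, i + 1 < n → δ (i+1) ≤ δ i) →
    0 ≤ δ (n-1) →
    c * δ 0 ≤ ∑ j ∈ range n, a j * δ j := by
  intro n
  induction n with
  | zero => omega
  | succ n ih =>
    intro _ a δ c hA hanti hlast
    rcases Nat.eq_zero_or_pos n with rfl | hn
    · have h0 : c ≤ a 0 := by simpa using hA 0 (by omega)
      have h1 : 0 ≤ δ 0 := by simpa using hlast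
      simpa using mul_le_mul_of_nonneg_right h0 h1
    · have hdn : 0 ≤ δ n := by simpa using hlast
      have hstep : δ n ≤ δ (n-1) := by
        have := hanti (n-1) (by omega)
        have e : n - 1 + 1 = n := by omega
        rwa [e] at this
      have IH := ih hn a (fun j => δ j - δ n) c
        (fun k hk => hA k (by omega))
        (fun i hi => by simpa using hanti i (by omega))
        (by simpa using hstep)
      have e1 : ∑ j ∈ range n, a j * (δ j - δ n)
          = (∑ j ∈ range n, a j * δ j) - (∑ j ∈ range n, a j) * δ n := by
        rw [Finset.sum_mul, ← Finset.sum_sub_distrib]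
        exact Finset.sum_congr rfl fun j _ => by ring
      have hAn : c ≤ ∑ j ∈ range (n+1), a j := hA n (by omega)
      have h2 : c * δ n ≤ (∑ j ∈ range (n+1), a j) * δ n :=
        mul_le_mul_of_nonneg_right hAn hdn
      have e2 : ∑ j ∈ range (n+1), a j = (∑ j ∈ range n, a j) + a n :=
        Finset.sum_range_succ a n
      have e3 : ∑ j ∈ range (n+1), a j * δ j
          = (∑ j ∈ range n, a j * δ j) + a n * δ n :=
        Finset.sum_range_succ _ n
      have IH' : c * (δ 0 - δ n) ≤ ∑ j ∈ range n, a j * δ j - (∑ j ∈ range n, a j) * δ n := by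
        rw [← e1]; simpa using IH
      nlinarith [IH', h2, e2, e3]

private lemma relu_diff_anti {x y b b' : ℝ} (hxy : x ≤ y) (hb : b ≤ b') :
    max (y - b') 0 - max (x - b') 0 ≤ max (y - b) 0 - max (x - b) 0 := by
  simp only [max_def]; split_ifs <;> linarith

private lemma relu_diff_mono {x y b b' : ℝ} (hxy : x ≤ y) (hb : b' ≤ b) :
    max (-x + b') 0 - max (-y + b') 0 ≤ max (-x + b) 0 - max (-y + b) 0 := by
  simp only [max_def]; split_ifs <;> linarith

theorem stacked_relu_strictMono_and_zero
    (d : ℕ) (hd : 1 ≤ d) (αp αm βp βm : Fin d → ℝ)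
    (hβp0 : βp ⟨0, by omega⟩ = 0) (hβm0 : βm ⟨0, by omega⟩ = 0)
    (hβp : Monotone βp) (hβm : Antitone βm)
    (hαp : ∀ k : Fin d, 0 < ∑ j ∈ Finset.Iic k, αp j)
    (hαm : ∀ k : Fin d, ∑ j ∈ Finset.Iic k, αm j < 0) :
    StrictMono (fun z : ℝ =>
      ∑ j, αp j * max (z - βp j) 0 + ∑ j, αm j * max (-z + βm j) 0) ∧
    (∑ j, αp j * max ((0:ℝ) - βp j) 0 + ∑ j, αm j * max (-(0:ℝ) + βm j) 0) = 0 := by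
  have hz0 : (⟨0, by omega⟩ : Fin d) = ⟨0, by omega⟩ := rfl
  constructor
  · intro x y hxy
    simp only
    -- partial-sum minima
    have hne : (Finset.univ : Finset (Fin d)).Nonempty := ⟨⟨0, by omega⟩, mem_univ _⟩
    set Sp : Fin d → ℝ := fun k => ∑ j ∈ Finset.Iic k, αp j with hSp
    set Sm : Fin d → ℝ := fun k => -∑ j ∈ Finset.Iic k, αm j with hSm
    set cp := Finset.univ.inf' hne Sp with hcp
    set cm := Finset.univ.inf' hne Sm with hcm
    have hcp_pos : 0 < cp := (Finset.lt_inf'_iff hne).2 fun k _ => hαp k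
    have hcm_pos : 0 < cm := (Finset.lt_inf'_iff hne).2 fun k _ => by
      simp only [hSm]; exact neg_pos.2 (hαm k)
    -- ℕ-indexed data
    set ap : ℕ → ℝ := fun j => if h : j < d then αp ⟨j, h⟩ else 0 with hap
    set am : ℕ → ℝ := fun j => if h : j < d then -αm ⟨j, h⟩ else 0 with ham
    set δp : ℕ → ℝ := fun j => if h : j < d then
        max (y - βp ⟨j, h⟩) 0 - max (x - βp ⟨j, h⟩) 0 else 0 with hδp
    set δm : ℕ → ℝ := fun j => if h : j < d then
        max (-x + βm ⟨j, h⟩) 0 - max (-y + βm ⟨j, h⟩) 0 else 0 with hδm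
    -- partial sums of ap over ranges equal Sp
    have hsum_ap : ∀ k (hk : k < d), ∑ j ∈ range (k+1), ap j = Sp ⟨k, hk⟩ := by
      intro k hk
      have h1 : (range (k+1) : Finset ℕ) = (Finset.Iic (⟨k, hk⟩ : Fin d)).map Fin.valEmbedding := by
        rw [Fin.map_valEmbedding_Iic]
        ext j; simp [Nat.lt_succ_iff]
      rw [h1, Finset.sum_map]
      refine Finset.sum_congr rfl fun j _ => ?_
      simp [hap, j.isLt]
    have hsum_am : ∀ k (hk : k < d), ∑ j ∈ range (k+1), am j = Sm ⟨k, hk⟩ := by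
      intro k hk
      have h1 : (range (k+1) : Finset ℕ) = (Finset.Iic (⟨k, hk⟩ : Fin d)).map Fin.valEmbedding := by
        rw [Fin.map_valEmbedding_Iic]
        ext j; simp [Nat.lt_succ_iff]
      rw [h1, Finset.sum_map]
      simp only [hSm, ← Finset.sum_neg_distrib]
      refine Finset.sum_congr rfl fun j _ => ?_
      simp [ham, j.isLt]
    -- Abel bounds
    have hp := abel_lb d hd ap δp cp
      (fun k hk => by rw [hsum_ap k hk]; exact Finset.inf'_le _ (mem_univ _))
      (fun i hi => by
        have h1 : i < d := by omega
        simp only [hδp, dif_pos hi, dif_pos h1]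
        exact relu_diff_anti hxy.le (hβp (by simp [Fin.le_def])))
      (by
        have h1 : d - 1 < d := by omega
        simp only [hδp, dif_pos h1]
        have := max_le_max (sub_le_sub_right hxy.le (βp ⟨d-1, h1⟩)) (le_refl (0:ℝ))
        linarith)
    have hm := abel_lb d hd am δm cm
      (fun k hk => by rw [hsum_am k hk]; exact Finset.inf'_le _ (mem_univ _))
      (fun i hi => by
        have h1 : i < d := by omega
        simp only [hδm, dif_pos hi, dif_pos h1]
        exact relu_diff_mono hxy.le (hβm (by simp [Fin.le_def])))
      (by
        have h1 : d - 1 < d := by omega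
        simp only [hδm, dif_pos h1]
        have := max_le_max (by linarith : -y + βm ⟨d-1, h1⟩ ≤ -x + βm ⟨d-1, h1⟩) (le_refl (0:ℝ))
        linarith)
    -- identify the sums with the differences
    have hPsum : ∑ j ∈ range d, ap j * δp j
        = (∑ j, αp j * max (y - βp j) 0) - ∑ j, αp j * max (x - βp j) 0 := by
      rw [← Fin.sum_univ_eq_sum_range (fun j => ap j * δp j) d, ← Finset.sum_sub_distrib]
      refine Finset.sum_congr rfl fun j _ => ?_
      simp only [hap, hδp, dif_pos j.isLt, Fin.eta]
      ring
    have hMsum : ∑ j ∈ range d, am j * δm j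
        = (∑ j, αm j * max (-y + βm j) 0) - ∑ j, αm j * max (-x + βm j) 0 := by
      rw [← Fin.sum_univ_eq_sum_range (fun j => am j * δm j) d, ← Finset.sum_sub_distrib]
      refine Finset.sum_congr rfl fun j _ => ?_
      simp only [ham, hδm, dif_pos j.isLt, Fin.eta]
      ring
    -- δp 0 and δm 0
    have hd0 : 0 < d := hd
    have hδp0 : δp 0 = max y 0 - max x 0 := by
      simp only [hδp, dif_pos hd0, hβp0, sub_zero]
    have hδm0 : δm 0 = max (-x) 0 - max (-y) 0 := by
      simp only [hδm, dif_pos hd0, hβm0, add_zero]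
    set s := max y 0 - max x 0 with hs
    set t := max (-x) 0 - max (-y) 0 with ht
    have hs0 : 0 ≤ s := sub_nonneg.2 (max_le_max hxy.le le_rfl)
    have ht0 : 0 ≤ t := sub_nonneg.2 (max_le_max (neg_le_neg hxy.le) le_rfl)
    have hst : s + t = y - x := by
      simp only [hs, ht, max_def]; split_ifs <;> linarith
    have hpos : 0 < cp * s + cm * t := by
      rcases lt_or_eq_of_le hs0 with hs' | hs'
      · have : 0 ≤ cm * t := mul_nonneg hcm_pos.le ht0
        nlinarith
      · have ht' : 0 < t := by rw [← hs'] at hst; linarith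
        have : 0 ≤ cp * s := mul_nonneg hcp_pos.le hs0
        nlinarith
    rw [hδp0] at hp
    rw [hδm0] at hm
    rw [hPsum] at hp
    rw [hMsum] at hm
    have : 0 < ((∑ j, αp j * max (y - βp j) 0) - ∑ j, αp j * max (x - βp j) 0)
        + ((∑ j, αm j * max (-y + βm j) 0) - ∑ j, αm j * max (-x + βm j) 0) := by
      calc (0:ℝ) < cp * s + cm * t := hpos
        _ ≤ _ := by rw [hs, ht]; exact add_le_add hp hm
    linarith
  · have h1 : ∀ j : Fin d, max ((0:ℝ) - βp j) 0 = 0 := by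
      intro j
      have : βp ⟨0, by omega⟩ ≤ βp j := hβp (by simp [Fin.le_def])
      rw [hβp0] at this
      exact max_eq_right (by linarith)
    have h2 : ∀ j : Fin d, max (-(0:ℝ) + βm j) 0 = 0 := by
      intro j
      have : βm j ≤ βm ⟨0, by omega⟩ := hβm (by simp [Fin.le_def])
      rw [hβm0] at this
      exact max_eq_right (by linarith)
    have e1 : (∑ j, αp j * max ((0:ℝ) - βp j) 0) = 0 :=
      Finset.sum_eq_zero fun j _ => by rw [h1 j, mul_zero]
    have e2 : (∑ j, αm j * max (-(0:ℝ) + βm j) 0) = 0 :=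
      Finset.sum_eq_zero fun j _ => by rw [h2 j, mul_zero]
    rw [e1, e2, add_zero]
end

section
/- Under the setting of the previous statement (connected graph, positive scaling c_i, odd sign-preserving φ_l, strictly convex C₀): ĉ E φ(Eᵀ ∇C(r(s))) = 0 (the zero vector in ℝⁿ) if and only if ∇C(r(s)) ∈ span{𝟙_n}. -/
open Matrix

theorem communication_term_zero_iff_identical_marginal_cost
    (n m : ℕ) (head tail : Fin m → Fin n) (hht : ∀ l, head l ≠ tail l)
    (hconn : ∀ i j : Fin n, Relation.ReflTransGen
      (fun a b => ∃ l, (head l = a ∧ tail l = b) ∨ (head l = b ∧ tail l = a)) i j)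
    (E : Matrix (Fin n) (Fin m) ℝ)
    (hE : ∀ i l, E i l = if i = head l then 1 else if i = tail l then -1 else 0)
    (c : Fin n → ℝ) (hc : ∀ i, 0 < c i)
    (r : Fin n → ℝ → ℝ)
    (C0 : ℝ → ℝ) (hC0 : Differentiable ℝ C0) (hC0m : StrictMono (deriv C0))
    (φ : Fin m → ℝ → ℝ) (hodd : ∀ l (z : ℝ), φ l (-z) = -φ l z)
    (hsign : ∀ l (z : ℝ), z ≠ 0 → 0 < z * φ l z)
    (s : Fin n → ℝ) :
    (fun i => c i * E.mulVec (fun l =>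
        φ l ((Matrix.mulVec Eᵀ fun i => deriv C0 (c i * r i (s i))) l)) i) = 0
      ↔ ∃ γ : ℝ, ∀ i, deriv C0 (c i * r i (s i)) = γ := by
  set g : Fin n → ℝ := fun i => deriv C0 (c i * r i (s i)) with hg
  have hphi0 : ∀ l, φ l 0 = 0 := by
    intro l
    have := hodd l 0
    simp at this
    linarith
  set z : Fin m → ℝ := fun l => g (head l) - g (tail l) with hzdef
  have hsplit : ∀ l i, E i l * g i =
      (if head l = i then g (head l) else 0) + (if tail l = i then -g (tail l) else 0) := by
    intro l i
    rw [hE]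
    rcases eq_or_ne i (head l) with h1 | h1
    · subst h1
      rw [if_pos rfl, if_pos rfl, if_neg (fun h => hht l h.symm)]
      ring
    · rcases eq_or_ne i (tail l) with h2 | h2
      · subst h2
        rw [if_neg h1, if_pos rfl, if_neg (fun h => h1 h.symm), if_pos rfl]
        ring
      · rw [if_neg h1, if_neg h2, if_neg (fun h => h1 h.symm), if_neg (fun h => h2 h.symm)]
        ring
  have hzi : ∀ l, ∑ i, E i l * g i = z l := by
    intro l
    rw [Finset.sum_congr rfl (fun i _ => hsplit l i), Finset.sum_add_distrib,
      Finset.sum_ite_eq, Finset.sum_ite_eq]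
    simp [hzdef]
    ring
  have hz : ∀ l, (Matrix.mulVec Eᵀ g) l = z l := by
    intro l
    simp only [Matrix.mulVec, Matrix.transpose_apply, dotProduct]
    exact hzi l
  constructor
  · intro h
    have h1 : ∀ i, (E.mulVec (fun l => φ l ((Matrix.mulVec Eᵀ g) l))) i = 0 := by
      intro i
      have := congrFun h i
      simp only [Pi.zero_apply] at this
      exact (mul_eq_zero.mp this).resolve_left (hc i).ne'
    have hsum : ∑ l, z l * φ l (z l) = 0 := by
      have hstep : ∑ i, g i * (E.mulVec (fun l => φ l ((Matrix.mulVec Eᵀ g) l))) i = 0 := by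
        simp [h1]
      calc ∑ l, z l * φ l (z l)
          = ∑ l, (∑ i, E i l * g i) * φ l (z l) := by
            apply Finset.sum_congr rfl; intro l _; rw [hzi l]
        _ = ∑ l, ∑ i, E i l * g i * φ l (z l) := by
            apply Finset.sum_congr rfl; intro l _; rw [Finset.sum_mul]
        _ = ∑ i, ∑ l, E i l * g i * φ l (z l) := Finset.sum_comm
        _ = ∑ i, g i * (E.mulVec (fun l => φ l ((Matrix.mulVec Eᵀ g) l))) i := by
            apply Finset.sum_congr rfl; intro i _
            simp only [Matrix.mulVec, dotProduct, Matrix.transpose_apply, Finset.mul_sum]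
            apply Finset.sum_congr rfl; intro l _
            rw [hzi l]; simp only [hzdef]; ring
        _ = 0 := hstep
    have hnonneg : ∀ l ∈ Finset.univ, 0 ≤ z l * φ l (z l) := by
      intro l _
      rcases eq_or_ne (z l) 0 with h0 | h0
      · rw [h0, hphi0, mul_zero]
      · exact (hsign l (z l) h0).le
    have hterm := (Finset.sum_eq_zero_iff_of_nonneg hnonneg).mp hsum
    have hedge : ∀ l, g (head l) = g (tail l) := by
      intro l
      by_contra hne
      have hz0 : z l ≠ 0 := sub_ne_zero_of_ne hne
      exact (hsign l (z l) hz0).ne' (hterm l (Finset.mem_univ l))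
    have heq : ∀ i j : Fin n, g i = g j := by
      intro i j
      induction hconn i j with
      | refl => rfl
      | tail _ hstep ih =>
        rcases hstep with ⟨l, ⟨ha, hb⟩ | ⟨ha, hb⟩⟩
        · rw [ih, ← ha, ← hb]; exact hedge l
        · rw [ih, ← ha, ← hb]; exact (hedge l).symm
    rcases isEmpty_or_nonempty (Fin n) with he | hne
    · exact ⟨0, fun i => (he.false i).elim⟩
    · obtain ⟨i0⟩ := hne
      exact ⟨g i0, fun i => heq i i0⟩
  · intro ⟨γ, hγ⟩
    funext i
    have hz0 : (fun l => φ l ((Matrix.mulVec Eᵀ g) l)) = fun l => (0:ℝ) := by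
      funext l
      rw [hz, hzdef]
      simp only
      rw [show g (head l) = γ from hγ _, show g (tail l) = γ from hγ _, sub_self, hphi0]
    simp only [Pi.zero_apply, hz0]
    simp [Matrix.mulVec, dotProduct]
end

section
/- Let E ∈ ℝ^{n×m} be an incidence matrix of a connected graph, and let ψ_l : ℝ → ℝ be strictly increasing for each edge l. If η*, η̂ ∈ range(Eᵀ) satisfy E ψ(η*) = E ψ(η̂) (componentwise application of ψ), then η* = η̂. -/
open Matrix

theorem edge_state_uniqueness
    (n m : ℕ) (head tail : Fin m → Fin n) (hht : ∀ l, head l ≠ tail l)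
    (hconn : ∀ i j : Fin n, Relation.ReflTransGen
      (fun a b => ∃ l, (head l = a ∧ tail l = b) ∨ (head l = b ∧ tail l = a)) i j)
    (E : Matrix (Fin n) (Fin m) ℝ)
    (hE : ∀ i l, E i l = if i = head l then 1 else if i = tail l then -1 else 0)
    (ψ : Fin m → ℝ → ℝ) (hψ : ∀ l, StrictMono (ψ l))
    (ηstar ηhat : Fin m → ℝ)
    (hstar : ∃ z : Fin n → ℝ, ηstar = Matrix.mulVec Eᵀ z)
    (hhat : ∃ z : Fin n → ℝ, ηhat = Matrix.mulVec Eᵀ z)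
    (heq : E.mulVec (fun l => ψ l (ηstar l)) = E.mulVec (fun l => ψ l (ηhat l))) :
    ηstar = ηhat := by
  obtain ⟨z1, h1⟩ := hstar
  obtain ⟨z2, h2⟩ := hhat
  have hη : ηstar - ηhat = Eᵀ.mulVec (z1 - z2) := by
    rw [h1, h2, Matrix.mulVec_sub]
  have h0 : (ηstar - ηhat) ⬝ᵥ
      ((fun l => ψ l (ηstar l)) - (fun l => ψ l (ηhat l))) = 0 := by
    rw [hη, Matrix.mulVec_transpose, ← Matrix.dotProduct_mulVec,
      Matrix.mulVec_sub, heq, sub_self, dotProduct_zero]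
  have hsum : ∑ k, (ηstar k - ηhat k) * (ψ k (ηstar k) - ψ k (ηhat k)) = 0 := by
    simpa [dotProduct, Pi.sub_apply] using h0
  have hnn : ∀ k ∈ Finset.univ,
      0 ≤ (ηstar k - ηhat k) * (ψ k (ηstar k) - ψ k (ηhat k)) := by
    intro k _
    rcases lt_trichotomy (ηstar k) (ηhat k) with h | h | h
    · have := hψ k h; nlinarith
    · simp [h]
    · have := hψ k h; nlinarith
  have hzero := (Finset.sum_eq_zero_iff_of_nonneg hnn).mp hsum
  funext l
  by_contra hne
  have := hzero l (Finset.mem_univ l)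
  rcases lt_or_gt_of_ne hne with h | h
  · have := hψ l h; nlinarith
  · have := hψ l h; nlinarith
end
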